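/- Let G be a countable discrete group and let Λ be a normal subgroup of G such that the quotient group G/Λ has the Haagerup property. Then the pair (G, Λ) has the Haagerup property from below if and only if G has the Haagerup property. -/

import Mathlib

open scoped ComplexOrder

/-- A function `φ : G → ℂ` is positive definite if for all `g_1, …, g_m ∈ G` and
`c_1, …, c_m ∈ ℂ` the sum `Σ_{i,j} c_i conj(c_j) φ(g_j⁻¹ g_i)` is a nonnegative real number
(equivalently, it is `≥ 0` for the standard partial order on `ℂ`). -/
def IsPositiveDefinite {G : Type*} [Group G] (φ : G → ℂ) : Prop :=
  ∀ (m : ℕ) (g : Fin m → G) (c : Fin m → ℂ),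
    0 ≤ ∑ i : Fin m, ∑ j : Fin m, c i * (starRingEnd ℂ) (c j) * φ ((g j)⁻¹ * g i)

/-- `f` is C0 on a subset `S` if for every `ε > 0` the set of elements of `S` where
`|f| ≥ ε` is finite. -/
def IsC0On {G : Type*} (f : G → ℂ) (S : Set G) : Prop :=
  ∀ ε : ℝ, 0 < ε → {g ∈ S | ε ≤ ‖f g‖}.Finite

/-- A group `G` has the Haagerup property if there is a sequence of C0 positive definite
functions on `G` converging pointwise to `1`. -/
def HasHaagerup (G : Type*) [Group G] : Prop :=
  ∃ φ : ℕ → G → ℂ, (∀ n, IsPositiveDefinite (φ n)) ∧ (∀ n, IsC0On (φ n) Set.univ) ∧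
    ∀ g : G, Filter.Tendsto (fun n => φ n g) Filter.atTop (nhds 1)

/-- The pair `(G, Λ)` has the Haagerup property from below if there is a sequence of positive
definite functions `ψ_n` on `G` with `|1 - ψ_n(g)| → 0` for every `g ∈ G`, each of which is C0
on `Λ`. -/
def HaagerupFromBelow {G : Type*} [Group G] (Λ : Subgroup G) : Prop :=
  ∃ ψ : ℕ → G → ℂ, (∀ n, IsPositiveDefinite (ψ n)) ∧
    (∀ g : G, Filter.Tendsto (fun n => ‖1 - ψ n g‖) Filter.atTop (nhds 0)) ∧
    ∀ n, IsC0On (ψ n) (Λ : Set G)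

section AuxHaagerup
variable {G : Type*} [Group G] {ψ φ : G → ℂ}

lemma pd_one (h : IsPositiveDefinite ψ) : ψ 1 = ((ψ 1).re : ℂ) ∧ 0 ≤ (ψ 1).re := by
  have := h 1 ![1] ![1]
  simp [Fin.sum_univ_one] at this
  rw [Complex.le_def] at this
  constructor
  · exact Complex.ext rfl (by simpa using this.2.symm)
  · simpa using this.1

lemma pd_two (h : IsPositiveDefinite ψ) (g : G) (c : ℂ) :
    0 ≤ ψ 1 + c * ψ g + (starRingEnd ℂ) c * ψ g⁻¹ + c * (starRingEnd ℂ) c * ψ 1 := by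
  have := h 2 ![1, g] ![1, c]
  simpa [Fin.sum_univ_two, mul_comm, mul_assoc, mul_left_comm, add_comm, add_assoc, add_left_comm]
    using this

lemma pd_inv (h : IsPositiveDefinite ψ) (g : G) : ψ g⁻¹ = (starRingEnd ℂ) (ψ g) := by
  have h1 := pd_two h g 1
  have hI := pd_two h g Complex.I
  rw [Complex.le_def] at h1 hI
  have him : (ψ 1).im = 0 := by rw [(pd_one h).1]; simp
  have e1 := h1.2
  have e2 := hI.2
  simp [Complex.add_im, Complex.mul_im, Complex.conj_im, Complex.conj_re, him,
    Complex.I_re, Complex.I_im] at e1 e2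
  apply Complex.ext <;> simp [Complex.conj_re, Complex.conj_im] <;> linarith

lemma pd_abs_le (h : IsPositiveDefinite ψ) (g : G) : ‖ψ g‖ ≤ (ψ 1).re := by
  rcases eq_or_ne (ψ g) 0 with hz | hz
  · simp [hz]; exact (pd_one h).2
  · set a : ℝ := ‖ψ g‖ with ha
    have hapos : 0 < a := by simpa [ha] using (norm_pos_iff.mpr hz)
    have key := pd_two h g (-(starRingEnd ℂ) (ψ g) / a)
    rw [pd_inv h g] at key
    have hc : (-(starRingEnd ℂ) (ψ g) / (a:ℂ)) * ψ g = -(a:ℂ) := by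
      field_simp
      rw [mul_comm, Complex.mul_conj]
      rw [← Complex.sq_norm]
      push_cast
      ring
    have hcc : (starRingEnd ℂ) (-(starRingEnd ℂ) (ψ g) / (a:ℂ)) * (starRingEnd ℂ) (ψ g)
        = -(a:ℂ) := by
      rw [← map_mul, hc]; simp
    have hc2 : (-(starRingEnd ℂ) (ψ g) / (a:ℂ)) * (starRingEnd ℂ) (-(starRingEnd ℂ) (ψ g) / (a:ℂ)) = 1 := by
      rw [Complex.mul_conj, ← Complex.sq_norm]
      have : ‖-(starRingEnd ℂ) (ψ g) / (a:ℂ)‖ = 1 := by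
        simp [map_div₀, ha, abs_of_pos hapos]
        exact hz
      rw [this]; norm_num
    rw [hc, hcc, hc2, Complex.le_def] at key
    have := key.1
    simp [Complex.add_re] at this
    linarith


lemma pd_cs (h : IsPositiveDefinite ψ) (m : ℕ) (g : Fin m → G) (c : Fin m → ℂ) :
    (‖∑ k, c k * ψ (g k)‖)^2 ≤
      (ψ 1).re * (∑ i, ∑ j, c i * (starRingEnd ℂ) (c j) * ψ ((g j)⁻¹ * g i)).re := by
  set S : ℂ := ∑ k, c k * ψ (g k) with hS
  set Q : ℂ := ∑ i, ∑ j, c i * (starRingEnd ℂ) (c j) * ψ ((g j)⁻¹ * g i) with hQ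
  set P : ℝ := (ψ 1).re with hP
  have hQ0 : 0 ≤ Q := h m g c
  have hQre : 0 ≤ Q.re := by rw [Complex.le_def] at hQ0; simpa using hQ0.1
  have hPnn : 0 ≤ P := (pd_one h).2
  have expand : ∀ d : ℂ, 0 ≤ d * (starRingEnd ℂ) d * ψ 1 + d * (starRingEnd ℂ) S
      + (starRingEnd ℂ) d * S + Q := by
    intro d
    have key := h (m+1) (Fin.cons 1 g) (Fin.cons d c)
    simp only [Fin.sum_univ_succ, Fin.cons_zero, Fin.cons_succ, inv_one, one_mul, mul_one] at key
    have e1 : ∑ j, d * (starRingEnd ℂ) (c j) * ψ (g j)⁻¹ = d * (starRingEnd ℂ) S := by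
      rw [hS, map_sum, Finset.mul_sum]
      refine Finset.sum_congr rfl fun j _ => ?_
      rw [pd_inv h, map_mul]
      ring
    have e2 : ∑ i, (c i * (starRingEnd ℂ) d * ψ (g i)
        + ∑ j, c i * (starRingEnd ℂ) (c j) * ψ ((g j)⁻¹ * g i))
        = (starRingEnd ℂ) d * S + Q := by
      rw [Finset.sum_add_distrib, hS, hQ, Finset.mul_sum]
      congr 1
      exact Finset.sum_congr rfl fun i _ => by ring
    rw [e1, e2] at key
    convert key using 1
    ring
  have quad : ∀ t : ℝ, 0 ≤ t^2 * P - 2*t*(‖S‖) + Q.re := by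
    intro t
    rcases eq_or_ne S 0 with h0 | h0
    · simp only [h0, map_zero, norm_zero, mul_zero, sub_zero]
      nlinarith [sq_nonneg t, mul_nonneg (sq_nonneg t) hPnn, hQre]
    · have haS : 0 < ‖S‖ := norm_pos_iff.mpr h0
      have key := expand (-(t:ℂ) * (S / (‖S‖ : ℂ)))
      have habs : ((‖S‖ : ℝ) : ℂ) ≠ 0 := by exact_mod_cast haS.ne'
      have hSS : S * (starRingEnd ℂ) S = ((‖S‖ : ℝ) : ℂ)^2 := by
        rw [Complex.mul_conj, Complex.normSq_eq_norm_sq]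
        push_cast
        ring
      have hd1 : (-(t:ℂ) * (S / (‖S‖ : ℂ))) * (starRingEnd ℂ) S
          = -(t:ℂ) * (‖S‖ : ℂ) := by
        rw [show (-(t:ℂ) * (S / (‖S‖ : ℂ))) * (starRingEnd ℂ) S
          = -(t:ℂ) * ((S * (starRingEnd ℂ) S) / (‖S‖ : ℂ)) by ring, hSS,
          pow_two, mul_div_assoc, div_self habs, mul_one]
      have hd2 : (starRingEnd ℂ) (-(t:ℂ) * (S / (‖S‖ : ℂ))) * S
          = -(t:ℂ) * (‖S‖ : ℂ) := by
        have := congrArg (starRingEnd ℂ) hd1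
        rw [map_mul] at this
        rw [mul_comm] at this ⊢
        simpa using this
      have hd3 : (-(t:ℂ) * (S / (‖S‖ : ℂ)))
          * (starRingEnd ℂ) (-(t:ℂ) * (S / (‖S‖ : ℂ))) = (((t^2 : ℝ)) : ℂ) := by
        rw [map_mul, map_neg, map_div₀, Complex.conj_ofReal, Complex.conj_ofReal,
          show (-(t:ℂ) * (S / (‖S‖ : ℂ))) * (-(t:ℂ) * ((starRingEnd ℂ) S / (‖S‖ : ℂ)))
            = (t:ℂ)^2 * ((S * (starRingEnd ℂ) S) / ((‖S‖ : ℂ) * (‖S‖ : ℂ))) by ring,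
          hSS]
        push_cast
        field_simp
      rw [hd3, hd1, hd2, (pd_one h).1, ← hP] at key
      rw [Complex.le_def] at key
      have := key.1
      simp [Complex.add_re, Complex.mul_re, Complex.ofReal_re, Complex.ofReal_im,
        ← Complex.ofReal_pow] at this
      linarith
  rcases eq_or_lt_of_le hPnn with hP0 | hP0
  · rcases eq_or_lt_of_le (norm_nonneg S) with hS0 | hS0
    · rw [← hS0]; simpa using mul_nonneg hPnn hQre
    · exfalso
      have := quad ((Q.re + 1)/(2*‖S‖))
      rw [← hP0] at this
      have h2 : 2*((Q.re + 1)/(2*‖S‖))*(‖S‖) = Q.re + 1 := by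
        field_simp
      rw [h2] at this
      nlinarith
  · have h1 := quad (‖S‖ / P)
    have h2 : (‖S‖ / P)^2 * P = ‖S‖^2 / P := by
      field_simp
    have h3 : 2*(‖S‖ / P)*‖S‖ = 2*(‖S‖^2/P) := by
      field_simp
    have h4 : ‖S‖^2/P ≤ Q.re := by linarith
    rw [mul_comm]
    exact (div_le_iff₀ hP0).mp h4

lemma pd_mul (hφ : IsPositiveDefinite φ) (hψ : IsPositiveDefinite ψ) :
    IsPositiveDefinite (fun g => φ g * ψ g) := by
  intro m g c
  classical
  set M : Matrix (Fin m) (Fin m) ℂ := Matrix.of (fun i j => ψ ((g i)⁻¹ * g j)) with hMdef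
  have hM : M.PosSemidef := by
    rw [Matrix.posSemidef_iff_dotProduct_mulVec]
    constructor
    · ext i j
      simp only [Matrix.conjTranspose_apply, hMdef, Matrix.of_apply]
      rw [show (star (ψ ((g j)⁻¹ * g i)) : ℂ) = (starRingEnd ℂ) (ψ ((g j)⁻¹ * g i)) from rfl,
        ← pd_inv hψ, mul_inv_rev, inv_inv]
    · intro x
      have h0 := hψ m g x
      have expand : dotProduct (star x) (M.mulVec x)
          = ∑ j, ∑ i, (starRingEnd ℂ) (x j) * (ψ ((g j)⁻¹ * g i) * x i) := by
        simp [dotProduct, Matrix.mulVec, Finset.mul_sum, hMdef]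
      have swap : (∑ i, ∑ j, (starRingEnd ℂ) (x j) * (ψ ((g j)⁻¹ * g i) * x i))
          = ∑ i, ∑ j, x i * (starRingEnd ℂ) (x j) * ψ ((g j)⁻¹ * g i) :=
        Finset.sum_congr rfl fun i _ => Finset.sum_congr rfl fun j _ => by ring
      rw [expand, Finset.sum_comm, swap]
      exact h0
  obtain ⟨m', v, hv⟩ := Matrix.posSemidef_iff_eq_sum_vecMulVec.mp hM
  set B : Matrix (Fin m') (Fin m) ℂ := Matrix.of fun k i => star (v k i) with hBdef
  have hB : M = B.conjTranspose * B := by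
    ext i j
    simp [hv, hBdef, Matrix.mul_apply, Matrix.sum_apply, Matrix.vecMulVec_apply]
  have hMe : ∀ i j, ψ ((g i)⁻¹ * g j) = ∑ k, (starRingEnd ℂ) (B k i) * B k j := by
    intro i j
    have h1 : M i j = (B.conjTranspose * B) i j := by rw [← hB]
    simpa [Matrix.mul_apply, Matrix.conjTranspose_apply, hMdef] using h1
  have key : (∑ i, ∑ j, c i * (starRingEnd ℂ) (c j) * ((fun g => φ g * ψ g) ((g j)⁻¹ * g i)))
      = ∑ k, ∑ i, ∑ j, (c i * B k i) * (starRingEnd ℂ) (c j * B k j) * φ ((g j)⁻¹ * g i) := by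
    have step : ∀ i j : Fin m, c i * (starRingEnd ℂ) (c j) * (φ ((g j)⁻¹ * g i) * ψ ((g j)⁻¹ * g i))
        = ∑ k, (c i * B k i) * (starRingEnd ℂ) (c j * B k j) * φ ((g j)⁻¹ * g i) := by
      intro i j
      rw [hMe j i,
        show c i * (starRingEnd ℂ) (c j)
            * (φ ((g j)⁻¹ * g i) * ∑ k, (starRingEnd ℂ) (B k j) * B k i)
          = ∑ k, c i * (starRingEnd ℂ) (c j) * φ ((g j)⁻¹ * g i)
            * ((starRingEnd ℂ) (B k j) * B k i) by
          rw [Finset.mul_sum, Finset.mul_sum]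
          exact Finset.sum_congr rfl fun k _ => by ring]
      refine Finset.sum_congr rfl fun k _ => ?_
      rw [map_mul]
      ring
    calc (∑ i, ∑ j, c i * (starRingEnd ℂ) (c j) * (φ ((g j)⁻¹ * g i) * ψ ((g j)⁻¹ * g i)))
        = ∑ i, ∑ j, ∑ k, (c i * B k i) * (starRingEnd ℂ) (c j * B k j) * φ ((g j)⁻¹ * g i) :=
          Finset.sum_congr rfl fun i _ => Finset.sum_congr rfl fun j _ => step i j
      _ = ∑ i, ∑ k, ∑ j, (c i * B k i) * (starRingEnd ℂ) (c j * B k j) * φ ((g j)⁻¹ * g i) :=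
          Finset.sum_congr rfl fun i _ => Finset.sum_comm
      _ = ∑ k, ∑ i, ∑ j, (c i * B k i) * (starRingEnd ℂ) (c j * B k j) * φ ((g j)⁻¹ * g i) :=
          Finset.sum_comm
  rw [key]
  exact Finset.sum_nonneg fun k _ => hφ m g (fun i => c i * B k i)


lemma exists_separated (hpd : IsPositiveDefinite ψ) {T : Set G} (hT : T.Infinite)
    (hfin : ∀ x ∈ T, ∀ δ : ℝ, 0 < δ → {y ∈ T | δ ≤ ‖ψ (x⁻¹ * y)‖}.Finite)
    {δ : ℝ} (hδ : 0 < δ) (n : ℕ) :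
    ∃ s : Finset G, s.card = n ∧ ↑s ⊆ T ∧
      ∀ x ∈ s, ∀ y ∈ s, x ≠ y → ‖ψ (x⁻¹ * y)‖ < δ := by
  classical
  induction n with
  | zero => exact ⟨∅, by simp⟩
  | succ n ih =>
    obtain ⟨s, hcard, hsub, hsep⟩ := ih
    have hbad : (⋃ x ∈ s, {y ∈ T | δ ≤ ‖ψ (x⁻¹ * y)‖}).Finite :=
      Set.Finite.biUnion s.finite_toSet fun x hx => hfin x (hsub hx) δ hδ
    obtain ⟨y, hy⟩ := (hT.diff ((hbad.union s.finite_toSet))).nonempty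
    have hyT : y ∈ T := hy.1
    have hyn : y ∉ s := fun h => hy.2 (Or.inr h)
    have hygood : ∀ x ∈ s, ‖ψ (x⁻¹ * y)‖ < δ := by
      intro x hx
      by_contra hge
      exact hy.2 (Or.inl (Set.mem_biUnion hx ⟨hyT, le_of_not_gt hge⟩))
    have habs_symm : ∀ a b : G, ‖ψ (a⁻¹ * b)‖ = ‖ψ (b⁻¹ * a)‖ := by
      intro a b
      rw [show b⁻¹ * a = (a⁻¹ * b)⁻¹ by group, pd_inv hpd]
      exact (Complex.norm_conj _).symm
    refine ⟨insert y s, ?_, ?_, ?_⟩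
    · rw [Finset.card_insert_of_notMem hyn, hcard]
    · intro z hz
      rcases Finset.mem_insert.mp hz with rfl | hz
      · exact hyT
      · exact hsub hz
    · intro a ha b hb hab
      rcases Finset.mem_insert.mp ha with ha' | ha'
      · rcases Finset.mem_insert.mp hb with hb' | hb'
        · exact absurd (ha'.trans hb'.symm) hab
        · rw [ha', habs_symm]; exact hygood b hb'
      · rcases Finset.mem_insert.mp hb with hb' | hb'
        · rw [hb']; exact hygood a ha'
        · exact hsep a ha' b hb' hab

lemma c0_fiber {Λ : Subgroup G} (hpd : IsPositiveDefinite ψ) (hc0 : IsC0On ψ (Λ : Set G))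
    (q : G ⧸ Λ) {ε : ℝ} (hε : 0 < ε) :
    {x : G | QuotientGroup.mk x = q ∧ ε ≤ ‖ψ x‖}.Finite := by
  classical
  by_contra hinf
  set T : Set G := {x : G | QuotientGroup.mk x = q ∧ ε ≤ ‖ψ x‖} with hTdef
  have hT : T.Infinite := hinf
  set P : ℝ := (ψ 1).re with hPdef
  obtain ⟨x₀, hx₀⟩ := hT.nonempty
  have hεP : ε ≤ P := le_trans hx₀.2 (pd_abs_le hpd x₀)
  have hP : 0 < P := lt_of_lt_of_le hε hεP
  set δ : ℝ := ε^2 / (2*P) with hδdef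
  have hδ : 0 < δ := by positivity
  -- finiteness of near-diagonal sets within the fiber
  have hfin : ∀ x ∈ T, ∀ d : ℝ, 0 < d → {y ∈ T | d ≤ ‖ψ (x⁻¹ * y)‖}.Finite := by
    intro x hx d hd
    have hsub : {y ∈ T | d ≤ ‖ψ (x⁻¹ * y)‖}
        ⊆ (fun y => x⁻¹ * y) ⁻¹' {g ∈ (Λ : Set G) | d ≤ ‖ψ g‖} := by
      intro y hy
      refine ⟨?_, hy.2⟩
      have h1 : (QuotientGroup.mk x : G ⧸ Λ) = QuotientGroup.mk y := by
        rw [hx.1, hy.1.1]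
      exact (QuotientGroup.eq).mp h1
    exact Set.Finite.subset (Set.Finite.preimage
      (Set.injOn_of_injective (fun a b hab => by
        simpa using mul_left_cancel hab)) (hc0 d hd)) hsub
  obtain ⟨N, hN⟩ := exists_nat_gt (2*P^2/ε^2)
  have hNbig : 2*P^2 < N * ε^2 := by
    rw [div_lt_iff₀ (by positivity)] at hN
    linarith
  obtain ⟨s, hcard, hsub, hsep⟩ := exists_separated hpd hT hfin hδ N
  -- enumerate s
  have e : Fin N ≃ {x // x ∈ s} := (finCongr hcard.symm).trans s.equivFin.symm
  set gv : Fin N → G := fun i => (e i : G) with hgv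
  have hginj : Function.Injective gv := fun a b hab => by
    apply e.injective
    exact Subtype.ext hab
  have hgmem : ∀ i, gv i ∈ s := fun i => (e i).2
  have hgT : ∀ i, gv i ∈ T := fun i => hsub (hgmem i)
  have hgabs : ∀ i, ε ≤ ‖ψ (gv i)‖ := fun i => (hgT i).2
  have hgne : ∀ i, ψ (gv i) ≠ 0 := by
    intro i h0
    have h1 := hgabs i
    rw [h0] at h1
    simp at h1
    linarith
  set c : Fin N → ℂ := fun i => (starRingEnd ℂ) (ψ (gv i)) / ((‖ψ (gv i)‖ : ℝ) : ℂ)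
    with hc
  have hcmul : ∀ i, c i * ψ (gv i) = ((‖ψ (gv i)‖ : ℝ) : ℂ) := by
    intro i
    have habs0 : ((‖ψ (gv i)‖ : ℝ) : ℂ) ≠ 0 := by
      exact_mod_cast (norm_pos_iff.mpr (hgne i)).ne'
    rw [hc]
    field_simp
    rw [mul_comm, Complex.mul_conj, Complex.normSq_eq_norm_sq]
    push_cast
    ring
  have hcabs : ∀ i, ‖c i‖ = 1 := by
    intro i
    rw [hc]
    simp only [norm_div, Complex.norm_conj, Complex.norm_real, Real.norm_eq_abs,
      abs_of_pos (norm_pos_iff.mpr (hgne i))]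
    exact div_self (norm_pos_iff.mpr (hgne i)).ne'
  -- lower bound for |S|
  set S : ℂ := ∑ i, c i * ψ (gv i) with hS
  have hSreal : S = ((∑ i, ‖ψ (gv i)‖ : ℝ) : ℂ) := by
    rw [hS]
    push_cast
    exact Finset.sum_congr rfl fun i _ => hcmul i
  have hSlb : (N : ℝ) * ε ≤ ‖S‖ := by
    rw [hSreal, Complex.norm_real, Real.norm_eq_abs]
    have h1 : (N : ℝ) * ε ≤ ∑ i : Fin N, ‖ψ (gv i)‖ := by
      calc (N : ℝ) * ε = ∑ _i : Fin N, ε := by simp [mul_comm]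
        _ ≤ _ := Finset.sum_le_sum fun i _ => hgabs i
    exact le_trans h1 (le_abs_self _)
  -- upper bound for Q.re
  set Q : ℂ := ∑ i, ∑ j, c i * (starRingEnd ℂ) (c j) * ψ ((gv j)⁻¹ * gv i) with hQ
  have hQub : Q.re ≤ (N : ℝ) * (P + N * δ) := by
    have h1 : Q.re ≤ ‖Q‖ := Complex.re_le_norm Q
    have h2 : ‖Q‖ ≤ ∑ i, ∑ j, ‖ψ ((gv j)⁻¹ * gv i)‖ := by
      refine le_trans (norm_sum_le _ _) (Finset.sum_le_sum fun i _ => ?_)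
      refine le_trans (norm_sum_le _ _) (Finset.sum_le_sum fun j _ => ?_)
      rw [norm_mul, norm_mul, hcabs i, Complex.norm_conj, hcabs j, one_mul, one_mul]
    have h3 : ∀ i, (∑ j, ‖ψ ((gv j)⁻¹ * gv i)‖) ≤ P + N * δ := by
      intro i
      have hterm : ∀ j, ‖ψ ((gv j)⁻¹ * gv i)‖
          ≤ δ + (if i = j then P - δ else 0) := by
        intro j
        by_cases hij : i = j
        · subst hij
          rw [if_pos rfl, inv_mul_cancel, (pd_one hpd).1, ← hPdef, Complex.norm_real, Real.norm_eq_abs,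
            abs_of_pos hP]
          linarith
        · simp only [if_neg hij, add_zero]
          exact le_of_lt (hsep (gv j) (hgmem j) (gv i) (hgmem i)
            (fun h => hij (hginj h.symm)))
      calc (∑ j, ‖ψ ((gv j)⁻¹ * gv i)‖)
          ≤ ∑ j : Fin N, (δ + (if i = j then P - δ else 0)) :=
            Finset.sum_le_sum fun j _ => hterm j
        _ = (N : ℝ) * δ + (P - δ) := by
            rw [Finset.sum_add_distrib, Finset.sum_ite_eq]
            simp [mul_comm]
        _ ≤ P + N * δ := by linarith
    calc Q.re ≤ ‖Q‖ := h1
      _ ≤ ∑ i, ∑ j, ‖ψ ((gv j)⁻¹ * gv i)‖ := h2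
      _ ≤ ∑ _i : Fin N, (P + N * δ) := Finset.sum_le_sum fun i _ => h3 i
      _ = (N : ℝ) * (P + N * δ) := by
          simp [Finset.sum_const, Finset.card_univ, nsmul_eq_mul]
          ring
  -- Cauchy-Schwarz
  have hcs := pd_cs hpd N gv c
  rw [← hS, ← hQ, ← hPdef] at hcs
  have hsq : ((N:ℝ) * ε)^2 ≤ (‖S‖)^2 := by
    have := hSlb
    nlinarith [norm_nonneg S, mul_nonneg (Nat.cast_nonneg N : (0:ℝ) ≤ N) hε.le]
  have hfinal : ((N:ℝ) * ε)^2 ≤ P * ((N : ℝ) * (P + N * δ)) := by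
    calc ((N:ℝ) * ε)^2 ≤ (‖S‖)^2 := hsq
      _ ≤ P * Q.re := hcs
      _ ≤ P * ((N : ℝ) * (P + N * δ)) := by
          exact mul_le_mul_of_nonneg_left hQub hP.le
  -- derive contradiction
  have hPδ : P * δ = ε^2 / 2 := by
    rw [hδdef]
    field_simp
  have hN0 : (0:ℝ) < N := by
    by_contra hN0
    push_neg at hN0
    have : (N:ℝ) = 0 := le_antisymm hN0 (Nat.cast_nonneg N)
    rw [this] at hNbig
    nlinarith
  nlinarith [hfinal, hNbig, hN0, hPδ, sq_nonneg ((N:ℝ)*ε)]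

end AuxHaagerup

/-- If `Λ` is a normal subgroup of a countable discrete group `G` such that
`G/Λ` has the Haagerup property, then `(G, Λ)` has the Haagerup property from below if and only
if `G` has the Haagerup property. -/
theorem haagerupFromBelow_iff_haagerup_of_quotient
    (G : Type*) [Group G] [Countable G] (Λ : Subgroup G) [Λ.Normal]
    (hquot : HasHaagerup (G ⧸ Λ)) :
    HaagerupFromBelow Λ ↔ HasHaagerup G := by
  constructor
  · rintro ⟨ψ, hψpd, hψtend, hψc0⟩
    obtain ⟨η, hηpd, hηc0, hηtend⟩ := hquot
    refine ⟨fun n g => ψ n g * η n (QuotientGroup.mk g), fun n => ?_, fun n => ?_, fun g => ?_⟩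
    · refine pd_mul (hψpd n) ?_
      intro m g c
      have := hηpd n m (fun i => QuotientGroup.mk (g i)) c
      simpa [QuotientGroup.mk_mul, QuotientGroup.mk_inv] using this
    · intro ε hε
      set M1 : ℝ := (ψ n 1).re with hM1
      set M2 : ℝ := (η n 1).re with hM2
      rcases eq_or_lt_of_le (pd_one (hψpd n)).2 with h10 | h1p
    -- if ψ n 1 = 0 then ψ n ≡ 0
      · have hz : ∀ x : G, ‖ψ n x‖ = 0 := fun x =>
          le_antisymm (le_trans (pd_abs_le (hψpd n) x) (le_of_eq h10.symm))
            (norm_nonneg _)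
        have : {g ∈ Set.univ | ε ≤ ‖(fun g => ψ n g * η n (QuotientGroup.mk g)) g‖}
            = ∅ := by
          ext x
          simp only [Set.mem_setOf_eq, Set.mem_empty_iff_false, iff_false, not_and]
          intro _
          rw [norm_mul]
          push_neg
          calc ‖ψ n x‖ * ‖η n (QuotientGroup.mk x)‖
              = 0 := by rw [hz x]; ring
            _ < ε := hε
        rw [this]
        exact Set.finite_empty
      rcases eq_or_lt_of_le (pd_one (hηpd n)).2 with h20 | h2p
      · have hz : ∀ x : G ⧸ Λ, ‖η n x‖ = 0 := fun x =>
          le_antisymm (le_trans (pd_abs_le (hηpd n) x) (le_of_eq h20.symm))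
            (norm_nonneg _)
        have : {g ∈ Set.univ | ε ≤ ‖(fun g => ψ n g * η n (QuotientGroup.mk g)) g‖}
            = ∅ := by
          ext x
          simp only [Set.mem_setOf_eq, Set.mem_empty_iff_false, iff_false, not_and]
          intro _
          rw [norm_mul]
          push_neg
          calc ‖ψ n x‖ * ‖η n (QuotientGroup.mk x)‖
              = 0 := by rw [hz (QuotientGroup.mk x)]; ring
            _ < ε := hε
        rw [this]
        exact Set.finite_empty
      · have hFfin := hηc0 n (ε / M1) (div_pos hε h1p)
        have hU : (⋃ q ∈ {q ∈ Set.univ | ε / M1 ≤ ‖η n q‖},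
            {x : G | QuotientGroup.mk x = q ∧ ε / M2 ≤ ‖ψ n x‖}).Finite :=
          Set.Finite.biUnion hFfin fun q _ => c0_fiber (hψpd n) (hψc0 n) q (div_pos hε h2p)
        refine Set.Finite.subset hU ?_
        intro x hx
        have hxabs : ε ≤ ‖ψ n x‖ * ‖η n (QuotientGroup.mk x)‖ := by
          have := hx.2
          rwa [norm_mul] at this
        have hb1 : ‖ψ n x‖ ≤ M1 := pd_abs_le (hψpd n) x
        have hb2 : ‖η n (QuotientGroup.mk x)‖ ≤ M2 := pd_abs_le (hηpd n) _
        have hη_lb : ε / M1 ≤ ‖η n (QuotientGroup.mk x)‖ := by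
          rw [div_le_iff₀ h1p]
          calc ε ≤ ‖ψ n x‖ * ‖η n (QuotientGroup.mk x)‖ := hxabs
            _ ≤ M1 * ‖η n (QuotientGroup.mk x)‖ :=
              mul_le_mul_of_nonneg_right hb1 (norm_nonneg _)
            _ = ‖η n (QuotientGroup.mk x)‖ * M1 := by ring
        have hψ_lb : ε / M2 ≤ ‖ψ n x‖ := by
          rw [div_le_iff₀ h2p]
          calc ε ≤ ‖ψ n x‖ * ‖η n (QuotientGroup.mk x)‖ := hxabs
            _ ≤ ‖ψ n x‖ * M2 :=
              mul_le_mul_of_nonneg_left hb2 (norm_nonneg _)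
        exact Set.mem_biUnion ⟨Set.mem_univ _, hη_lb⟩ ⟨rfl, hψ_lb⟩
    · have h1 : Filter.Tendsto (fun n => ψ n g) Filter.atTop (nhds 1) := by
        rw [tendsto_iff_norm_sub_tendsto_zero]
        have := hψtend g
        refine this.congr fun n => ?_
        rw [norm_sub_rev]
      have h2 := hηtend (QuotientGroup.mk g)
      simpa using h1.mul h2
  · rintro ⟨φ, hpd, hc0, htend⟩
    refine ⟨φ, hpd, fun g => ?_, fun n ε hε => Set.Finite.subset (hc0 n ε hε)
      (fun x hx => ⟨trivial, hx.2⟩)⟩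
    have := tendsto_iff_norm_sub_tendsto_zero.mp (htend g)
    refine this.congr fun n => ?_
    rw [norm_sub_rev]
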